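/- Every set in a minimal σ-interval presentation of a multi-path matroid M is a cocircuit of M; consequently, any minimal σ-interval presentation is a minimal presentation of M. In particular, every set in a minimal σ-interval presentation of a multi-path matroid of nullity m has at most m+1 elements. -/

import Mathlib

open Set Matroid

variable {α ι : Type*}

/-- `M` is the transversal matroid on ground set `S` presented by the set system `A`:
the independent sets of `M` are exactly the partial transversals of `A`. -/
def IsTransversalPres (M : Matroid α) (S : Set α) (A : ι → Set α) : Prop :=
  M.E = S ∧ ∀ I : Set α, M.Indep I ↔ I ⊆ S ∧
    ∃ φ : I → ι, Function.Injective φ ∧ ∀ x : I, (x : α) ∈ A (φ x)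

/-- `σ` is a cyclic permutation of the set `E`. -/
def IsCyclicOn (σ : Equiv.Perm α) (E : Set α) : Prop :=
  (∀ x ∉ E, σ x = x) ∧ ∀ x ∈ E, ∀ y ∈ E, ∃ n : ℕ, (σ ^ n) x = y

/-- `I` is the σ-interval with first element `f` and last element `l`. -/
def IsCycInterval (σ : Equiv.Perm α) (f l : α) (I : Set α) : Prop :=
  ∃ k : ℕ, (σ ^ k) f = l ∧ I = {x | ∃ j ≤ k, (σ ^ j) f = x}

/-- The family of sets `A` is an antichain: no member contains another. -/
def IsSetAntichain (A : ι → Set α) : Prop := ∀ i j, i ≠ j → ¬ A i ⊆ A j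

/-- `A` (with first elements `f` and last elements `l`) is a presentation of `M` by an
antichain of σ-intervals in the cyclic permutation `σ` of the ground set. -/
def IsMultiPathPres (M : Matroid α) (σ : Equiv.Perm α) {r : ℕ}
    (f l : Fin r → α) (A : Fin r → Set α) : Prop :=
  IsCyclicOn σ M.E ∧ (∀ i, f i ∈ M.E) ∧ (∀ i, IsCycInterval σ (f i) (l i) (A i)) ∧
  IsSetAntichain A ∧ IsTransversalPres M M.E A

/-- A multi-path matroid: a transversal matroid with a presentation by an antichain of
σ-intervals in some cyclic permutation of the ground set. -/
def IsMultiPath (M : Matroid α) : Prop :=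
  ∃ (σ : Equiv.Perm α) (r : ℕ) (f : Fin r → α) (l : Fin r → α) (A : Fin r → Set α),
    IsMultiPathPres M σ f l A

/-- A lattice path matroid: a transversal matroid with a presentation by an antichain of
(nonempty) intervals in some linear order (encoded by an injection `g` into `ℕ`) on the
ground set. -/
def IsLatticePathM (M : Matroid α) : Prop :=
  ∃ g : α → ℕ, Set.InjOn g M.E ∧
    ∃ (r : ℕ) (A : Fin r → Set α) (a b : Fin r → ℕ),
      (∀ i, A i = {x ∈ M.E | a i ≤ g x ∧ g x ≤ b i}) ∧ (∀ i, (A i).Nonempty) ∧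
      IsSetAntichain A ∧ IsTransversalPres M M.E A

/-- Deletion `M \ X`. -/
def mDelete (M : Matroid α) (X : Set α) : Matroid α := M ↾ (M.E \ X)

/-- Contraction `M / X`. -/
def mContract (M : Matroid α) (X : Set α) : Matroid α := (mDelete M✶ X)✶

/-- `N` is a minor of `M`. -/
def IsMinorOf (N M : Matroid α) : Prop :=
  ∃ C D : Set α, C ⊆ M.E ∧ D ⊆ M.E ∧ Disjoint C D ∧ N = mDelete (mContract M C) D

/-- `C` is a circuit of `M`: a minimal dependent set. -/
def IsCircuitOf (M : Matroid α) (C : Set α) : Prop :=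
  M.Dep C ∧ ∀ D ⊂ C, ¬ M.Dep D

/-- `C` is a cocircuit of `M`: a circuit of the dual. -/
def IsCocircuitOf (M : Matroid α) (C : Set α) : Prop := IsCircuitOf M✶ C

/-- `M` is connected: it has no loops and every pair of distinct elements of the
ground set lies in a common circuit. -/
def IsConnectedM (M : Matroid α) : Prop :=
  (∀ e ∈ M.E, M.Indep {e}) ∧
  ∀ x ∈ M.E, ∀ y ∈ M.E, x ≠ y → ∃ C, IsCircuitOf M C ∧ x ∈ C ∧ y ∈ C

/-- The height of the lattice path with set of North steps `w` after its first `t` steps. -/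
noncomputable def pathHt {n : ℕ} (w : Set (Fin n)) (t : ℕ) : ℕ := (w ∩ {j | (j : ℕ) < t}).ncard

/-- `w` is (the set of North steps of) a lattice path from `(0,0)` to `(m,r)` going
neither below `P` nor above `Q`. -/
def IsPathBetween (m r : ℕ) (P Q w : Set (Fin (m + r))) : Prop :=
  pathHt w (m + r) = r ∧ ∀ t ≤ m + r, pathHt P t ≤ pathHt w t ∧ pathHt w t ≤ pathHt Q t

/-- The data `(k, m, r, P, Q)` is a diagram: `P` and `Q` are lattice paths with `m` East
and `r` North steps (starting at `p_1 = (k-1,0)` and `p_k = (0,k-1)` respectively) and,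
comparing heights along antidiagonals, `Q` never goes below `P`. -/
def IsDiagram (k m r : ℕ) (P Q : Set (Fin (m + r))) : Prop :=
  1 ≤ k ∧ pathHt P (m + r) = r ∧ pathHt Q (m + r) = r ∧
    ∀ t ≤ m + r, pathHt P t ≤ k - 1 + pathHt Q t

/-- `w` is a b-path of the diagram `(k, m, r, P, Q)` from the starting point
`p_i = (k-i, i-1)` to the ending point `p'_i`: it stays weakly above `P` and weakly
below `Q` (heights compared along antidiagonals). -/
def IsBPath (k m r : ℕ) (P Q : Set (Fin (m + r))) (i : ℕ) (w : Set (Fin (m + r))) : Prop :=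
  1 ≤ i ∧ i ≤ k ∧ pathHt w (m + r) = r ∧
  ∀ t ≤ m + r, pathHt P t ≤ i - 1 + pathHt w t ∧ i - 1 + pathHt w t ≤ k - 1 + pathHt Q t

/-- A matroid isomorphism between matroids on possibly different types. -/
def MatroidIso {β : Type*} (M : Matroid α) (N : Matroid β) : Prop :=
  ∃ e : α → β, Set.BijOn e M.E N.E ∧ ∀ B ⊆ M.E, (M.IsBase B ↔ N.IsBase (e '' B))

/-- `b` is the first element of `X` encountered strictly after `a` in the cyclic order `σ`
(i.e. `b` is the image of `a` under the cyclic permutation induced by `σ` on `X`). -/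
def CycNextIn (σ : Equiv.Perm α) (X : Set α) (a b : α) : Prop :=
  ∃ n : ℕ, 1 ≤ n ∧ (σ ^ n) a = b ∧ ∀ j, 1 ≤ j → j < n → (σ ^ j) a ∉ X

set_option linter.unusedSectionVars false
set_option linter.unusedVariables false

section Cyc

open Function

variable {α : Type*} {σ : Equiv.Perm α} {E : Set α} {e x y : α}

lemma IsCyclicOn.mapsTo (hcyc : IsCyclicOn σ E) (hx : x ∈ E) : σ x ∈ E := by
  by_contra h'
  have h1 : σ (σ x) = σ x := hcyc.1 _ h'
  have h2 : σ x = x := σ.injective h1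
  rw [h2] at h'; exact h' hx

lemma IsCyclicOn.pow_mapsTo (hcyc : IsCyclicOn σ E) (t : ℕ) (hx : x ∈ E) :
    (σ ^ t) x ∈ E := by
  induction t with
  | zero => simpa using hx
  | succ k ih => rw [pow_succ', Equiv.Perm.mul_apply]; exact hcyc.mapsTo ih

/-- main orbit lemma -/
lemma IsCyclicOn.orbit_facts [Fintype α] (hcyc : IsCyclicOn σ E) (he : e ∈ E) :
    ((σ ^ E.ncard) e = e) ∧
    (∀ a b, a < E.ncard → b < E.ncard → (σ ^ a) e = (σ ^ b) e → a = b) ∧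
    (∀ y ∈ E, ∃ t, t < E.ncard ∧ (σ ^ t) e = y) := by
  classical
  have hex : ∃ t, 0 < t ∧ (σ ^ t) e = e := by
    refine ⟨orderOf σ, orderOf_pos σ, ?_⟩
    rw [pow_orderOf_eq_one]; rfl
  set p := Nat.find hex with hp
  obtain ⟨hppos, hpe⟩ := Nat.find_spec hex
  -- power reduction mod p
  have hper : ∀ q : ℕ, ((σ ^ p) ^ q) e = e := by
    intro q
    induction q with
    | zero => rfl
    | succ k ih =>
      rw [pow_succ, Equiv.Perm.mul_apply]
      have : (σ ^ p) e = e := hpe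
      rw [this, ih]
  have hred : ∀ m : ℕ, (σ ^ m) e = (σ ^ (m % p)) e := by
    intro m
    conv_lhs => rw [← Nat.mod_add_div m p]
    rw [pow_add, pow_mul, Equiv.Perm.mul_apply, hper]
  -- injectivity below p
  have hinj : ∀ a b, a < p → b < p → (σ ^ a) e = (σ ^ b) e → a = b := by
    have key : ∀ a b, a ≤ b → b < p → (σ ^ a) e = (σ ^ b) e → a = b := by
      intro a b hab hbp hsab
      by_contra hne
      have hlt : 0 < b - a := by omega
      have : (σ ^ (b - a)) e = e := by
        have : (σ ^ a) ((σ ^ (b-a)) e) = (σ ^ a) e := by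
          rw [← Equiv.Perm.mul_apply, ← pow_add]
          have hab' : a + (b - a) = b := by omega
          rw [hab', hsab]
        exact (σ ^ a).injective this
      have hba : b - a < p := lt_of_le_of_lt (Nat.sub_le b a) hbp
      have := Nat.find_min hex (hp ▸ hba)
      exact this ⟨hlt, ‹(σ ^ (b-a)) e = e›⟩
    intro a b ha hb hs
    rcases le_total a b with h | h
    · exact key a b h hb hs
    · exact (key b a h ha hs.symm).symm
  -- E is the image of range p
  have hEeq : E = ↑((Finset.range p).image (fun t => (σ ^ t) e)) := by
    ext y
    simp only [Finset.coe_image, Finset.coe_range, Set.mem_image, Set.mem_Iio]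
    constructor
    · intro hy
      obtain ⟨t, ht⟩ := hcyc.2 e he y hy
      exact ⟨t % p, Nat.mod_lt _ hppos, by rw [← hred]; exact ht⟩
    · rintro ⟨t, -, rfl⟩
      exact hcyc.pow_mapsTo t he
  have hcard : E.ncard = p := by
    rw [hEeq, Set.ncard_coe_finset, Finset.card_image_of_injOn, Finset.card_range]
    intro a ha b hb hab
    simp only [Finset.mem_coe, Finset.mem_range] at ha hb
    exact hinj a b ha hb hab
  rw [hcard]
  refine ⟨hpe, hinj, ?_⟩
  intro y hy
  obtain ⟨t, ht⟩ := hcyc.2 e he y hy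
  exact ⟨t % p, Nat.mod_lt _ hppos, by rw [← hred]; exact ht⟩

end Cyc
set_option linter.unusedSectionVars false

section IntervalAPI

open Function

/-- Bundled context for a multipath presentation with chosen interval lengths. -/
structure MPC {α : Type*} (M : Matroid α) (σ : Equiv.Perm α) {r : ℕ}
    (f l : Fin r → α) (A : Fin r → Set α) (k : Fin r → ℕ) : Prop where
  cyc : IsCyclicOn σ M.E
  fE : ∀ s, f s ∈ M.E
  kf : ∀ s, (σ ^ k s) (f s) = l s
  kA : ∀ s, A s = {x | ∃ j ≤ k s, (σ ^ j) (f s) = x}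
  anti : IsSetAntichain A
  ind : ∀ I : Set α, M.Indep I ↔ I ⊆ M.E ∧
    ∃ φ : I → Fin r, Function.Injective φ ∧ ∀ x : I, (x : α) ∈ A (φ x)

variable {α : Type*} [Fintype α] {M : Matroid α} {σ : Equiv.Perm α} {r : ℕ}
  {f l : Fin r → α} {A : Fin r → Set α} {k : Fin r → ℕ} {s t i j : Fin r} {x y : α}

lemma isMultiPathPres_iff_mpc :
    IsMultiPathPres M σ f l A ↔ ∃ k, MPC M σ f l A k := by
  constructor
  · rintro ⟨hcyc, hfE, hint, hanti, hground, hind⟩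
    choose k hk1 hk2 using hint
    exact ⟨k, hcyc, hfE, hk1, hk2, hanti, hind⟩
  · rintro ⟨k, H⟩
    refine ⟨H.cyc, H.fE, fun s => ⟨k s, H.kf s, H.kA s⟩, H.anti, rfl, H.ind⟩

namespace MPC

lemma mem_A_iff (H : MPC M σ f l A k) : x ∈ A s ↔ ∃ t ≤ k s, (σ ^ t) (f s) = x := by
  rw [H.kA s]; rfl

lemma pow_f_mem (H : MPC M σ f l A k) {t : ℕ} (ht : t ≤ k s) : (σ ^ t) (f s) ∈ A s :=
  H.mem_A_iff.2 ⟨t, ht, rfl⟩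

lemma f_mem (H : MPC M σ f l A k) : f s ∈ A s := by
  simpa using H.pow_f_mem (s := s) (Nat.zero_le _)

lemma l_mem (H : MPC M σ f l A k) : l s ∈ A s :=
  H.mem_A_iff.2 ⟨k s, le_rfl, H.kf s⟩

lemma A_subset_E (H : MPC M σ f l A k) : A s ⊆ M.E := by
  intro x hx
  obtain ⟨t, -, rfl⟩ := H.mem_A_iff.1 hx
  exact H.cyc.pow_mapsTo t (H.fE s)

lemma A_mono (H : MPC M σ f l A k) (hf : f s = f t) (hkk : k s ≤ k t) : A s ⊆ A t := by
  intro x hx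
  obtain ⟨a, ha, rfl⟩ := H.mem_A_iff.1 hx
  rw [hf]
  exact H.pow_f_mem (le_trans ha hkk)

lemma f_injective (H : MPC M σ f l A k) : Function.Injective f := by
  intro s t hst
  by_contra hne
  rcases le_total (k s) (k t) with h | h
  · exact H.anti s t hne (H.A_mono hst h)
  · exact H.anti t s (Ne.symm hne) (H.A_mono hst.symm h)

lemma A_eq_ground (H : MPC M σ f l A k) (hks : M.E.ncard - 1 ≤ k s) : A s = M.E := by
  refine subset_antisymm H.A_subset_E (fun y hy => ?_)
  obtain ⟨-, -, hsurj⟩ := H.cyc.orbit_facts (H.fE s)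
  obtain ⟨t, htlt, rfl⟩ := hsurj y hy
  exact H.pow_f_mem (by omega)

lemma k_add_two_le (H : MPC M σ f l A k) (hr : 2 ≤ r) : k s + 2 ≤ M.E.ncard := by
  have hn1 : 1 ≤ M.E.ncard := (Set.ncard_pos (M.E.toFinite)).2 ⟨f s, H.fE s⟩
  by_contra hcon
  have hks : M.E.ncard - 1 ≤ k s := by omega
  obtain ⟨j, hj⟩ : ∃ j : Fin r, j ≠ s := by
    rcases Decidable.eq_or_ne (⟨0, by omega⟩ : Fin r) s with h | h
    · exact ⟨⟨1, by omega⟩, by rw [← h]; simp [Fin.ext_iff]⟩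
    · exact ⟨_, h⟩
  exact H.anti j s hj ((H.A_subset_E).trans (H.A_eq_ground hks).symm.subset)

lemma enum_inj (H : MPC M σ f l A k) (hr : 2 ≤ r) {a b : ℕ}
    (ha : a ≤ k s) (hb : b ≤ k s) (hab : (σ ^ a) (f s) = (σ ^ b) (f s)) : a = b := by
  obtain ⟨-, hinj, -⟩ := H.cyc.orbit_facts (H.fE s)
  have hk2 := H.k_add_two_le (s := s) hr
  exact hinj a b (by omega) (by omega) hab

lemma pow_card (H : MPC M σ f l A k) (hx : x ∈ M.E) : (σ ^ M.E.ncard) x = x :=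
  (H.cyc.orbit_facts hx).1

lemma n_pos (H : MPC M σ f l A k) (hr : 1 ≤ r) : 1 ≤ M.E.ncard := by
  exact (Set.ncard_pos (M.E.toFinite)).2 ⟨f ⟨0, by omega⟩, H.fE _⟩

lemma n_ge_two (H : MPC M σ f l A k) (hr : 2 ≤ r) : 2 ≤ M.E.ncard := by
  have := H.k_add_two_le (s := ⟨0, by omega⟩) hr
  omega

lemma sigma_ne (H : MPC M σ f l A k) (hr : 2 ≤ r) (hx : x ∈ M.E) : σ x ≠ x := by
  intro hfix
  have hpow : ∀ t : ℕ, (σ ^ t) x = x := by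
    intro t
    induction t with
    | zero => rfl
    | succ m ih => rw [pow_succ, Equiv.Perm.mul_apply, hfix, ih]
  have h01 : f ⟨0, by omega⟩ ≠ f ⟨1, by omega⟩ := by
    intro h
    have := H.f_injective h
    simp [Fin.ext_iff] at this
  obtain ⟨t0, -, h0⟩ := (H.cyc.orbit_facts hx).2.2 _ (H.fE ⟨0, by omega⟩)
  obtain ⟨t1, -, h1⟩ := (H.cyc.orbit_facts hx).2.2 _ (H.fE ⟨1, by omega⟩)
  rw [hpow] at h0 h1
  exact h01 (h0.symm.trans h1)

lemma rev_mem_A_iff (H : MPC M σ f l A k) (hr : 2 ≤ r) :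
    x ∈ A s ↔ ∃ t ≤ k s, ((σ⁻¹) ^ t) (l s) = x := by
  have key : ∀ t ≤ k s, ((σ⁻¹) ^ t) (l s) = (σ ^ (k s - t)) (f s) := by
    intro t ht
    rw [← H.kf s]
    rw [inv_pow]
    apply (σ ^ t).injective
    simp only [Equiv.Perm.coe_inv, Equiv.apply_symm_apply]
    rw [← Equiv.Perm.mul_apply, ← pow_add]
    congr 2
    omega
  rw [H.mem_A_iff]
  constructor
  · rintro ⟨a, ha, rfl⟩
    refine ⟨k s - a, by omega, ?_⟩
    rw [key _ (by omega)]
    congr 2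
    omega
  · rintro ⟨a, ha, rfl⟩
    exact ⟨k s - a, by omega, (key a ha).symm⟩

lemma l_injective (H : MPC M σ f l A k) (hr : 2 ≤ r) : Function.Injective l := by
  intro s t hst
  by_contra hne
  have hmono : ∀ u v : Fin r, l u = l v → k u ≤ k v → A u ⊆ A v := by
    intro u v huv hkk z hz
    obtain ⟨a, ha, rfl⟩ := (H.rev_mem_A_iff hr).1 hz
    rw [huv]
    exact (H.rev_mem_A_iff hr).2 ⟨a, le_trans ha hkk, rfl⟩
  rcases le_total (k s) (k t) with h | h
  · exact H.anti s t hne (hmono s t hst h)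
  · exact H.anti t s (Ne.symm hne) (hmono t s hst.symm h)

/-- if `y ∈ A s` and `y ≠ f s` then the predecessor of `y` is in `A s`. -/
lemma pred_mem (H : MPC M σ f l A k) (hy : y ∈ A s) (hne : y ≠ f s) : σ⁻¹ y ∈ A s := by
  obtain ⟨a, ha, rfl⟩ := H.mem_A_iff.1 hy
  have ha1 : 1 ≤ a := by
    rcases Nat.eq_zero_or_pos a with h | h
    · subst h; simp at hne
    · exact h
  have : σ⁻¹ ((σ ^ a) (f s)) = (σ ^ (a - 1)) (f s) := by
    apply σ.injective
    simp only [Equiv.Perm.coe_inv, Equiv.apply_symm_apply]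
    rw [← Equiv.Perm.mul_apply]
    rw [← pow_succ']
    congr 2
    omega
  rw [this]
  exact H.pow_f_mem (by omega)

lemma eq_f_of_pred_not_mem (H : MPC M σ f l A k) (hy : y ∈ A s) (hpred : σ⁻¹ y ∉ A s) :
    y = f s := by
  by_contra hne
  exact hpred (H.pred_mem hy hne)

lemma snd_mem (H : MPC M σ f l A k) (hr : 2 ≤ r) (h1 : 1 ≤ k s) :
    σ (f s) ∈ A s ∧ σ (f s) ≠ f s := by
  constructor
  · have : σ (f s) = (σ ^ 1) (f s) := by simp
    rw [this]; exact H.pow_f_mem h1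
  · exact H.sigma_ne hr (H.fE s)

/-- If `l j` lies in `A i` (and `j ≠ i`), then `f i ∈ A j`. -/
lemma wrap_f (H : MPC M σ f l A k) (hr : 2 ≤ r) (hne : j ≠ i) (hl : l j ∈ A i) :
    f i ∈ A j := by
  obtain ⟨p, hp, hpl⟩ := H.mem_A_iff.1 hl
  by_cases hpk : p ≤ k j
  · -- f i = σ⁻¹ ^ p (l j) ∈ A j
    refine (H.rev_mem_A_iff hr).2 ⟨p, hpk, ?_⟩
    rw [← hpl, inv_pow]
    apply (σ ^ p).injective
    simp [Equiv.Perm.coe_inv, Equiv.apply_symm_apply]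
  · -- otherwise A j ⊆ A i, contradiction
    exfalso
    refine H.anti j i hne (fun z hz => ?_)
    obtain ⟨a, ha, rfl⟩ := (H.rev_mem_A_iff hr).1 hz
    rw [← hpl]
    have : ((σ⁻¹) ^ a) ((σ ^ p) (f i)) = (σ ^ (p - a)) (f i) := by
      rw [inv_pow]
      apply (σ ^ a).injective
      simp only [Equiv.Perm.coe_inv, Equiv.apply_symm_apply]
      rw [← Equiv.Perm.mul_apply, ← pow_add]
      congr 2
      omega
    rw [this]
    exact H.pow_f_mem (by omega)

/-- If `f i ∈ A j` with `j ≠ i` then also `σ⁻¹ (f i) ∈ A j`. -/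
lemma gm_mem (H : MPC M σ f l A k) (hne : j ≠ i) (hf : f i ∈ A j) : σ⁻¹ (f i) ∈ A j := by
  apply H.pred_mem hf
  intro hcon
  exact hne (H.f_injective hcon).symm

/-- `σ (l i) ∉ A i` (the successor of the last element is outside). -/
lemma g1_not_mem (H : MPC M σ f l A k) (hr : 2 ≤ r) : σ (l i) ∉ A i := by
  intro hcon
  have hg1 : σ (l i) = (σ ^ (k i + 1)) (f i) := by
    rw [← H.kf i, ← Equiv.Perm.mul_apply, ← pow_succ']
  rw [hg1] at hcon
  obtain ⟨b, hb, hbe⟩ := H.mem_A_iff.1 hcon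
  have hk2 := H.k_add_two_le (s := i) hr
  obtain ⟨-, hinj, -⟩ := H.cyc.orbit_facts (H.fE i)
  have := hinj _ _ (by omega) (by omega) hbe
  omega

/-- `σ⁻¹ (f i) ∉ A i`. -/
lemma gm_not_mem (H : MPC M σ f l A k) (hr : 2 ≤ r) : σ⁻¹ (f i) ∉ A i := by
  intro hcon
  have hgm : σ⁻¹ (f i) = (σ ^ (M.E.ncard - 1)) (f i) := by
    apply σ.injective
    simp only [Equiv.Perm.coe_inv, Equiv.apply_symm_apply]
    rw [← Equiv.Perm.mul_apply, ← pow_succ']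
    have hn := H.n_ge_two hr
    have : M.E.ncard - 1 + 1 = M.E.ncard := by omega
    rw [this]
    exact (H.pow_card (H.fE i)).symm
  rw [hgm] at hcon
  obtain ⟨b, hb, hbe⟩ := H.mem_A_iff.1 hcon
  have hk2 := H.k_add_two_le (s := i) hr
  obtain ⟨-, hinj, -⟩ := H.cyc.orbit_facts (H.fE i)
  have := hinj _ _ (by omega) (by omega) hbe
  omega

/-- first-exit: if `f j ∈ A i`, `j ≠ i`, and `A j ⊄ A i`, then `σ (l i) ∈ A j`. -/
lemma exit_g1 (H : MPC M σ f l A k) (hr : 2 ≤ r) (hne : j ≠ i) (hfj : f j ∈ A i) :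
    σ (l i) ∈ A j := by
  have hnotsub : ¬ A j ⊆ A i := H.anti j i hne
  have hex : ∃ a, a ≤ k j ∧ (σ ^ a) (f j) ∉ A i := by
    by_contra hcon
    push_neg at hcon
    refine hnotsub (fun z hz => ?_)
    obtain ⟨a, ha, rfl⟩ := H.mem_A_iff.1 hz
    exact hcon a ha
  classical
  obtain ⟨a, hak, hanotin⟩ := hex
  have hex' : ∃ t, (σ ^ t) (f j) ∉ A i := ⟨a, hanotin⟩
  set t0 := Nat.find hex' with ht0
  have ht0spec : (σ ^ t0) (f j) ∉ A i := Nat.find_spec hex'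
  have ht0le : t0 ≤ a := Nat.find_le hanotin
  have ht0pos : 1 ≤ t0 := by
    rcases Nat.eq_zero_or_pos t0 with h | h
    · exfalso; apply ht0spec; rw [h]; simpa using hfj
    · exact h
  have hprev : (σ ^ (t0 - 1)) (f j) ∈ A i := by
    by_contra hcon
    have := Nat.find_min hex' (m := t0 - 1) (by omega)
    exact this hcon
  obtain ⟨u, hu, hue⟩ := H.mem_A_iff.1 hprev
  have hstep : (σ ^ t0) (f j) = σ ((σ ^ (t0 - 1)) (f j)) := by
    rw [← Equiv.Perm.mul_apply, ← pow_succ']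
    congr 2
    omega
  have huk : u = k i := by
    by_contra hne'
    apply ht0spec
    have h2 : (σ ^ t0) (f j) = (σ ^ (u + 1)) (f i) := by
      rw [hstep, ← hue, ← Equiv.Perm.mul_apply, ← pow_succ']
    rw [h2]
    exact H.pow_f_mem (by omega)
  have h3 : σ (l i) = (σ ^ t0) (f j) := by
    rw [hstep, ← hue, huk, H.kf i]
  rw [h3]
  exact H.pow_f_mem (by omega)

end MPC

end IntervalAPI
section TransversalAPI

open Function

variable {α : Type*} [Fintype α] {M : Matroid α} {σ : Equiv.Perm α} {r : ℕ}
  {f l : Fin r → α} {A : Fin r → Set α} {k : Fin r → ℕ} {s t i j : Fin r} {x y : α}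
  {I B : Set α}

namespace MPC

lemma indep_of_sdr (H : MPC M σ f l A k) (hIE : I ⊆ M.E) (φ : I → Fin r)
    (hinj : Injective φ) (hmem : ∀ x : I, (x : α) ∈ A (φ x)) : M.Indep I :=
  (H.ind I).2 ⟨hIE, φ, hinj, hmem⟩

lemma indep_of_range (H : MPC M σ f l A k) {ψ : Fin r → α} (hinj : Injective ψ)
    (hmem : ∀ j, ψ j ∈ A j) : M.Indep (Set.range ψ) := by
  have hsub : Set.range ψ ⊆ M.E := by
    rintro x ⟨j, rfl⟩; exact H.A_subset_E (hmem j)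
  set e := Equiv.ofInjective ψ hinj with he
  refine H.indep_of_sdr hsub (fun x => e.symm x) (fun a b hab => e.symm.injective hab) ?_
  intro x
  have hx : ψ (e.symm x) = (x : α) := by
    have h1 := e.apply_symm_apply x
    have h2 : (e (e.symm x) : α) = (x : α) := congrArg Subtype.val h1
    rwa [he, Equiv.ofInjective_apply] at h2
  have := hmem (e.symm x)
  rw [hx] at this
  exact this

lemma ncard_range (hinj : Injective (fun j : Fin r => f j)) : (Set.range f).ncard = r := by
  have : (Set.range f).ncard = Nat.card (Set.range f) := (Nat.card_coe_set_eq _).symm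
  rw [this, Nat.card_range_of_injective hinj, Nat.card_eq_fintype_card, Fintype.card_fin]

lemma range_f_indep (H : MPC M σ f l A k) : M.Indep (Set.range f) :=
  H.indep_of_range H.f_injective (fun j => H.f_mem)

lemma indep_ncard_le (H : MPC M σ f l A k) (hI : M.Indep I) : I.ncard ≤ r := by
  obtain ⟨-, φ, hinj, -⟩ := (H.ind I).1 hI
  have h1 : I.ncard = Nat.card I := (Nat.card_coe_set_eq _).symm
  rw [h1]
  have := Nat.card_le_card_of_injective φ hinj
  simpa using this

lemma base_of_indep_ncard (H : MPC M σ f l A k) (hI : M.Indep I) (hc : I.ncard = r) :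
    M.IsBase I := by
  obtain ⟨B, hB, hIB⟩ := hI.exists_isBase_superset
  have hBle : B.ncard ≤ r := H.indep_ncard_le hB.indep
  have : I = B := Set.eq_of_subset_of_ncard_le hIB (by omega) B.toFinite
  rwa [this]

lemma range_f_base (H : MPC M σ f l A k) : M.IsBase (Set.range f) :=
  H.base_of_indep_ncard H.range_f_indep (ncard_range H.f_injective)

lemma base_ncard (H : MPC M σ f l A k) (hB : M.IsBase B) : B.ncard = r := by
  rw [hB.ncard_eq_ncard_of_isBase H.range_f_base, ncard_range H.f_injective]

/-- Any base has a bijective system of distinct representatives, for any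
presentation of `M` (on the same index set). -/
lemma base_sdr_gen (H : MPC M σ f l A k) {A' : Fin r → Set α}
    (hind' : ∀ I : Set α, M.Indep I → ∃ φ : I → Fin r, Injective φ ∧ ∀ x : I, (x : α) ∈ A' (φ x))
    (hB : M.IsBase B) :
    ∃ ψ : Fin r → α, Injective ψ ∧ (∀ j, ψ j ∈ A' j) ∧ Set.range ψ = B := by
  obtain ⟨φ, hφinj, hφmem⟩ := hind' B hB.indep
  haveI : Fintype B := B.toFinite.fintype
  have hcard : Fintype.card B = Fintype.card (Fin r) := by
    rw [Fintype.card_fin, ← H.base_ncard hB, Set.ncard_eq_toFinset_card']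
    simp [Set.toFinset_card]
  have hbij : Bijective φ := (Fintype.bijective_iff_injective_and_card φ).2 ⟨hφinj, hcard⟩
  set e := Equiv.ofBijective φ hbij with he
  refine ⟨fun j => (e.symm j : α), ?_, ?_, ?_⟩
  · intro a b hab
    have : e.symm a = e.symm b := Subtype.ext hab
    simpa using congrArg e this
  · intro j
    have h1 : φ (e.symm j) = j := e.apply_symm_apply j
    have := hφmem (e.symm j)
    rwa [h1] at this
  · ext x
    constructor
    · rintro ⟨j, rfl⟩; exact (e.symm j).2
    · intro hx
      exact ⟨e ⟨x, hx⟩, by simp⟩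

lemma base_sdr (H : MPC M σ f l A k) (hB : M.IsBase B) :
    ∃ ψ : Fin r → α, Injective ψ ∧ (∀ j, ψ j ∈ A j) ∧ Set.range ψ = B :=
  H.base_sdr_gen (fun I hI => by
    obtain ⟨-, φ, hinj, hmem⟩ := (H.ind I).1 hI
    exact ⟨φ, hinj, hmem⟩) hB

lemma base_meets (H : MPC M σ f l A k) (hB : M.IsBase B) (i : Fin r) :
    (A i ∩ B).Nonempty := by
  obtain ⟨ψ, -, hmem, hrange⟩ := H.base_sdr hB
  exact ⟨ψ i, hmem i, by rw [← hrange]; exact ⟨i, rfl⟩⟩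

/-- The key sufficient criterion: if the family `(A j \ A i)_{j ≠ i}` has a system of
distinct representatives, then `A i` is a cocircuit. -/
lemma cocircuit_of_diffs (H : MPC M σ f l A k) (i : Fin r)
    (g : {j : Fin r // j ≠ i} → α) (hginj : Injective g)
    (hg : ∀ j, g j ∈ A j.1 \ A i) : IsCocircuitOf M (A i) := by
  classical
  -- for each e ∈ A i, a base meeting A i exactly in e
  have key : ∀ e ∈ A i, ∃ B, M.IsBase B ∧ B ∩ A i = {e} := by
    intro e he
    set ψ : Fin r → α := fun j => if h : j = i then e else g ⟨j, h⟩ with hψ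
    have hψi : ψ i = e := by simp [hψ]
    have hψne : ∀ (j) (h : j ≠ i), ψ j = g ⟨j, h⟩ := by
      intro j h; simp [hψ, h]
    have hmem : ∀ j, ψ j ∈ A j := by
      intro j
      by_cases h : j = i
      · subst h; rw [hψi]; exact he
      · rw [hψne j h]; exact (hg ⟨j, h⟩).1
    have hnotin : ∀ (j) (h : j ≠ i), ψ j ∉ A i := by
      intro j h; rw [hψne j h]; exact (hg ⟨j, h⟩).2
    have hinj : Injective ψ := by
      intro a b hab
      by_cases ha : a = i <;> by_cases hb : b = i
      · rw [ha, hb]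
      · exfalso; rw [ha] at hab; rw [hψi, hψne b hb] at hab
        exact (hg ⟨b, hb⟩).2 (hab ▸ he)
      · exfalso; rw [hb] at hab; rw [hψi, hψne a ha] at hab
        exact (hg ⟨a, ha⟩).2 (hab.symm ▸ he)
      · rw [hψne a ha, hψne b hb] at hab
        have := hginj hab
        simpa using this
    have hindep : M.Indep (Set.range ψ) := H.indep_of_range hinj hmem
    have hbase : M.IsBase (Set.range ψ) :=
      H.base_of_indep_ncard hindep (ncard_range hinj)
    refine ⟨Set.range ψ, hbase, ?_⟩
    ext x
    constructor
    · rintro ⟨⟨j, rfl⟩, hxA⟩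
      by_cases h : j = i
      · subst h; rw [hψi]; rfl
      · exact absurd hxA (hnotin j h)
    · rintro rfl
      exact ⟨⟨i, hψi⟩, he⟩
  constructor
  · -- M✶.Dep (A i)
    rw [Matroid.dep_iff]
    refine ⟨?_, by rw [Matroid.dual_ground]; exact H.A_subset_E⟩
    intro hind
    rw [Matroid.dual_indep_iff_exists'] at hind
    obtain ⟨-, B, hB, hdisj⟩ := hind
    obtain ⟨z, hz1, hz2⟩ := H.base_meets hB i
    exact hdisj.ne_of_mem hz1 hz2 rfl
  · -- minimality
    intro D hD hdep
    rw [Matroid.dep_iff] at hdep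
    obtain ⟨e, heA, heD⟩ := Set.exists_of_ssubset hD
    obtain ⟨B, hB, hBA⟩ := key e heA
    apply hdep.1
    rw [Matroid.dual_indep_iff_exists']
    refine ⟨hdep.2, B, hB, ?_⟩
    rw [Set.disjoint_left]
    intro z hzD hzB
    have hzA : z ∈ A i := hD.subset hzD
    have : z ∈ B ∩ A i := ⟨hzB, hzA⟩
    rw [hBA] at this
    exact heD (this ▸ hzD)

end MPC

end TransversalAPI
section Blocker

open Function

variable {α : Type*} [Fintype α] {M : Matroid α} {σ : Equiv.Perm α} {r : ℕ}
  {f l : Fin r → α} {A : Fin r → Set α} {k : Fin r → ℕ} {s t i j : Fin r} {x y : α}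
  {I B S : Set α}

/-- A blocker for the first element of `A i`. -/
def IsBlockerAt (M : Matroid α) {r : ℕ} (f : Fin r → α) (A : Fin r → Set α) (i : Fin r)
    (S : Set α) : Prop :=
  M.Indep S ∧ S ∩ A i = {f i} ∧ {j | (A j ∩ S).Nonempty}.ncard = S.ncard

namespace MPC

lemma blocker_bound (H : MPC M σ f l A k) (hr : 2 ≤ r)
    (hS : IsBlockerAt M f A i S) : r ≤ (M.E \ A i).ncard + 1 := by
  classical
  obtain ⟨hind, hcap, hcount⟩ := hS
  have hfiS : f i ∈ S ∧ f i ∈ A i := by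
    have : f i ∈ S ∩ A i := by rw [hcap]; rfl
    exact ⟨this.1, this.2⟩
  have hSE : S ⊆ M.E := hind.subset_ground
  set J := {j | (A j ∩ S).Nonempty} with hJ
  have hiJ : i ∈ J := ⟨f i, hfiS.2, hfiS.1⟩
  -- the complement of J maps injectively into (M.E \ A i) \ S via j ↦ l j
  have hmap : ∀ j ∈ Jᶜ, l j ∈ (M.E \ A i) \ S := by
    intro j hj
    have hjne : j ≠ i := by
      intro h; rw [h] at hj; exact hj hiJ
    have hempty : A j ∩ S = ∅ := by
      by_contra hne
      exact hj (Set.nonempty_iff_ne_empty.2 hne)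
    have hlS : l j ∉ S := by
      intro hc
      have : l j ∈ A j ∩ S := ⟨H.l_mem, hc⟩
      rw [hempty] at this; exact this
    have hlA : l j ∉ A i := by
      intro hc
      have hfi : f i ∈ A j := H.wrap_f hr hjne hc
      have : f i ∈ A j ∩ S := ⟨hfi, hfiS.1⟩
      rw [hempty] at this; exact this
    exact ⟨⟨H.A_subset_E H.l_mem, hlA⟩, hlS⟩
  have hcardOut : Jᶜ.ncard ≤ ((M.E \ A i) \ S).ncard := by
    have h1 : (l '' Jᶜ).ncard = Jᶜ.ncard :=
      Set.ncard_image_of_injOn (fun a _ b _ hab => (H.l_injective hr) hab)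
    have h2 : l '' Jᶜ ⊆ (M.E \ A i) \ S := by
      rintro z ⟨j, hj, rfl⟩; exact hmap j hj
    calc Jᶜ.ncard = (l '' Jᶜ).ncard := h1.symm
    _ ≤ ((M.E \ A i) \ S).ncard := Set.ncard_le_ncard h2 (Set.toFinite _)
  -- arithmetic
  have hJr : J.ncard + Jᶜ.ncard = r := by
    have := Set.ncard_add_ncard_compl J
    simpa using this
  have hinter : (M.E \ A i) ∩ S = S \ {f i} := by
    ext z
    simp only [Set.mem_inter_iff, Set.mem_diff, Set.mem_singleton_iff]
    constructor
    · rintro ⟨⟨hzE, hzA⟩, hzS⟩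
      refine ⟨hzS, ?_⟩
      intro h; rw [h] at hzA; exact hzA hfiS.2
    · rintro ⟨hzS, hzne⟩
      refine ⟨⟨hSE hzS, ?_⟩, hzS⟩
      intro hc
      have : z ∈ S ∩ A i := ⟨hzS, hc⟩
      rw [hcap] at this
      exact hzne this
  have hsplit : ((M.E \ A i) ∩ S).ncard + ((M.E \ A i) \ S).ncard = (M.E \ A i).ncard :=
    Set.ncard_inter_add_ncard_diff_eq_ncard _ _ (Set.toFinite _)
  have hSf : (S \ {f i}).ncard = S.ncard - 1 := Set.ncard_diff_singleton_of_mem hfiS.1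
  have hS1 : 1 ≤ S.ncard := Set.ncard_pos (S.toFinite) |>.2 ⟨f i, hfiS.1⟩
  rw [hinter, hSf] at hsplit
  omega

end MPC

end Blocker
section HallDiff

open Function

lemma pow_pow_apply {α : Type*} (σ : Equiv.Perm α) (a b : ℕ) (x : α) :
    (σ ^ a) ((σ ^ b) x) = (σ ^ (a + b)) x := by
  rw [← Equiv.Perm.mul_apply, ← pow_add]

variable {α : Type*} [Fintype α] {M : Matroid α} {σ : Equiv.Perm α} {r : ℕ}
  {f l : Fin r → α} {A : Fin r → Set α} {k : Fin r → ℕ} {s t i j : Fin r} {x y : α}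

namespace MPC

lemma pow_add_card (H : MPC M σ f l A k) (hx : x ∈ M.E) (a : ℕ) :
    (σ ^ (a + M.E.ncard)) x = (σ ^ a) x := by
  rw [← pow_pow_apply, H.pow_card hx]

lemma ncard_A (H : MPC M σ f l A k) (hr : 2 ≤ r) : (A s).ncard = k s + 1 := by
  classical
  have hA : A s = ↑((Finset.range (k s + 1)).image (fun t => (σ ^ t) (f s))) := by
    ext z
    simp only [Finset.coe_image, Finset.coe_range, Set.mem_image, Set.mem_Iio]
    rw [H.mem_A_iff]
    constructor
    · rintro ⟨a, ha, rfl⟩; exact ⟨a, by omega, rfl⟩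
    · rintro ⟨a, ha, rfl⟩; exact ⟨a, by omega, rfl⟩
  rw [hA, Set.ncard_coe_finset, Finset.card_image_of_injOn, Finset.card_range]
  intro a ha b hb hab
  simp only [Finset.mem_coe, Finset.mem_range] at ha hb
  exact H.enum_inj hr (by omega) (by omega) hab

lemma gamma_ncard (H : MPC M σ f l A k) (hr : 2 ≤ r) :
    (M.E \ A i).ncard = M.E.ncard - 1 - k i := by
  rw [Set.ncard_diff H.A_subset_E, H.ncard_A hr]
  omega

lemma gamma_mem_iff (H : MPC M σ f l A k) (hr : 2 ≤ r) :
    y ∈ M.E \ A i ↔ ∃ c, 1 ≤ c ∧ c ≤ M.E.ncard - 1 - k i ∧ (σ ^ c) (l i) = y := by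
  have hk2 := H.k_add_two_le (s := i) hr
  obtain ⟨hpowid, hinj, hsurj⟩ := H.cyc.orbit_facts (H.fE i)
  constructor
  · rintro ⟨hyE, hyA⟩
    obtain ⟨a, han, rfl⟩ := hsurj y hyE
    have hak : ¬ a ≤ k i := fun h => hyA (H.pow_f_mem h)
    refine ⟨a - k i, by omega, by omega, ?_⟩
    rw [← H.kf i, pow_pow_apply]
    have e : a - k i + k i = a := by omega
    rw [e]
  · rintro ⟨c, hc1, hcm, rfl⟩
    have heq : (σ ^ c) (l i) = (σ ^ (c + k i)) (f i) := by
      rw [← H.kf i, pow_pow_apply]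
    constructor
    · exact H.cyc.pow_mapsTo c (H.A_subset_E H.l_mem)
    · intro hcon
      obtain ⟨b, hb, hbe⟩ := H.mem_A_iff.1 hcon
      rw [heq] at hbe
      have := hinj _ _ (by omega) (by omega) hbe.symm
      omega

lemma gamma_inj (H : MPC M σ f l A k) (hr : 2 ≤ r) {a b : ℕ}
    (ha1 : 1 ≤ a) (ham : a ≤ M.E.ncard - 1 - k i) (hb1 : 1 ≤ b)
    (hbm : b ≤ M.E.ncard - 1 - k i) (heq : (σ ^ a) (l i) = (σ ^ b) (l i)) : a = b := by
  have hk2 := H.k_add_two_le (s := i) hr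
  obtain ⟨-, hinj, -⟩ := H.cyc.orbit_facts (H.fE i)
  have ha' : (σ ^ a) (l i) = (σ ^ (a + k i)) (f i) := by rw [← H.kf i, pow_pow_apply]
  have hb' : (σ ^ b) (l i) = (σ ^ (b + k i)) (f i) := by rw [← H.kf i, pow_pow_apply]
  rw [ha', hb'] at heq
  have := hinj _ _ (by omega) (by omega) heq
  omega

lemma gm_eq_pow (H : MPC M σ f l A k) (hr : 2 ≤ r) :
    σ⁻¹ (f i) = (σ ^ (M.E.ncard - 1 - k i)) (l i) := by
  have hk2 := H.k_add_two_le (s := i) hr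
  apply σ.injective
  simp only [Equiv.Perm.coe_inv, Equiv.apply_symm_apply]
  have h1 : σ ((σ ^ (M.E.ncard - 1 - k i)) (l i))
      = (σ ^ (1 + (M.E.ncard - 1 - k i))) (l i) := by
    have := pow_pow_apply σ 1 (M.E.ncard - 1 - k i) (l i)
    simpa using this
  rw [h1, ← H.kf i, pow_pow_apply]
  have e : 1 + (M.E.ncard - 1 - k i) + k i = M.E.ncard := by omega
  rw [e, H.pow_card (H.fE i)]

/-- the straddle lemma: an interval `A j` containing points of `Γ_i` on both sides of a
`Γ_i`-point `σ^c (l i)` must contain that point. -/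
lemma straddle (H : MPC M σ f l A k) (hr : 2 ≤ r) (hne : j ≠ i) {a b c : ℕ}
    (ha1 : 1 ≤ a) (hac : a < c) (hcb : c < b) (hbm : b ≤ M.E.ncard - 1 - k i)
    (hxa : (σ ^ a) (l i) ∈ A j) (hxb : (σ ^ b) (l i) ∈ A j) :
    (σ ^ c) (l i) ∈ A j := by
  have hk2 := H.k_add_two_le (s := i) hr
  have hkj2 := H.k_add_two_le (s := j) hr
  have hlE : l i ∈ M.E := H.A_subset_E H.l_mem
  obtain ⟨p, hp, hpe⟩ := H.mem_A_iff.1 hxa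
  obtain ⟨q, hq, hqe⟩ := H.mem_A_iff.1 hxb
  rcases le_or_gt p q with hpq | hpq
  · -- going forwards within A j
    obtain ⟨-, hinjx, -⟩ := H.cyc.orbit_facts (H.cyc.pow_mapsTo a hlE : (σ ^ a) (l i) ∈ M.E)
    have h1 : (σ ^ (q - p)) ((σ ^ a) (l i)) = (σ ^ b) (l i) := by
      rw [← hpe, pow_pow_apply]
      have e : q - p + p = q := by omega
      rw [e, hqe]
    have h2 : (σ ^ (b - a)) ((σ ^ a) (l i)) = (σ ^ b) (l i) := by
      rw [pow_pow_apply]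
      have e : b - a + a = b := by omega
      rw [e]
    have hqp : q - p = b - a := hinjx _ _ (by omega) (by omega) (h1.trans h2.symm)
    have hqp2 : q = p + (b - a) := by omega
    have h3 : (σ ^ (c - a + p)) (f j) = (σ ^ c) (l i) := by
      rw [← pow_pow_apply σ (c - a) p (f j), hpe, pow_pow_apply]
      have e : c - a + a = c := by omega
      rw [e]
    rw [← h3]
    exact H.pow_f_mem (by omega)
  · -- A j wraps all the way around: A i ⊆ A j, contradiction
    exfalso
    obtain ⟨-, hinjy, -⟩ := H.cyc.orbit_facts (H.cyc.pow_mapsTo b hlE : (σ ^ b) (l i) ∈ M.E)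
    have hble : k i + b + 1 ≤ M.E.ncard := by omega
    have h1 : (σ ^ (p - q)) ((σ ^ b) (l i)) = (σ ^ a) (l i) := by
      rw [← hqe, pow_pow_apply]
      have e : p - q + q = p := by omega
      rw [e, hpe]
    have h2 : (σ ^ (a + (M.E.ncard - b))) ((σ ^ b) (l i)) = (σ ^ a) (l i) := by
      rw [pow_pow_apply]
      have e : a + (M.E.ncard - b) + b = a + M.E.ncard := by omega
      rw [e, H.pow_add_card hlE]
    have hd : p - q = a + (M.E.ncard - b) := hinjy _ _ (by omega) (by omega) (h1.trans h2.symm)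
    have hd2 : p = q + a + (M.E.ncard - b) := by omega
    apply H.anti i j (fun h => hne h.symm)
    intro z hz
    obtain ⟨u, hu, rfl⟩ := H.mem_A_iff.1 hz
    have hform : (σ ^ (q + u + (M.E.ncard - (k i + b)))) (f j) = (σ ^ u) (f i) := by
      have e1 : (σ ^ (q + u + (M.E.ncard - (k i + b)))) (f j)
          = (σ ^ (u + (M.E.ncard - (k i + b)))) ((σ ^ q) (f j)) := by
        rw [pow_pow_apply]
        have e : u + (M.E.ncard - (k i + b)) + q = q + u + (M.E.ncard - (k i + b)) := by omega
        rw [e]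
      rw [e1, hqe, ← H.kf i, pow_pow_apply, pow_pow_apply]
      have e3 : u + (M.E.ncard - (k i + b)) + b + k i = u + M.E.ncard := by omega
      rw [e3, H.pow_add_card (H.fE i)]
    rw [← hform]
    exact H.pow_f_mem (by omega)

end MPC

end HallDiff
section HallMain

open Function

variable {α : Type*} [Fintype α] {M : Matroid α} {σ : Equiv.Perm α} {r : ℕ}
  {f l : Fin r → α} {A : Fin r → Set α} {k : Fin r → ℕ} {s t i j : Fin r} {x y : α}

namespace MPC

lemma exists_diffs_sdr (H : MPC M σ f l A k) (hr : 2 ≤ r) (i : Fin r)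
    (hmi : r ≤ (M.E \ A i).ncard + 1) :
    ∃ g : {j : Fin r // j ≠ i} → α, Injective g ∧ ∀ j, g j ∈ A j.1 \ A i := by
  classical
  have hk2 := H.k_add_two_le (s := i) hr
  have hgam : (M.E \ A i).ncard = M.E.ncard - 1 - k i := H.gamma_ncard hr
  set tf : {j : Fin r // j ≠ i} → Finset α := fun j => (A j.1 \ A i).toFinset with htf
  have htf_mem : ∀ (j : {j : Fin r // j ≠ i}) (z : α), z ∈ tf j ↔ z ∈ A j.1 \ A i := by
    intro j z; simp [htf]
  have hall : ∀ s : Finset {j : Fin r // j ≠ i}, s.card ≤ (s.biUnion tf).card := by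
    suffices hN : ∀ (N : ℕ) (s : Finset {j : Fin r // j ≠ i}), s.card ≤ N →
        s.card ≤ (s.biUnion tf).card from fun s => hN s.card s le_rfl
    intro N
    induction N with
    | zero => intro s hs; omega
    | succ N ihN =>
      intro s hsN
      by_contra hvio
      push_neg at hvio
      have hDU : ∀ j ∈ s, ∀ z, z ∈ A j.1 \ A i → z ∈ s.biUnion tf := by
        intro j hj z hz
        exact Finset.mem_biUnion.2 ⟨j, hj, (htf_mem j z).2 hz⟩
      by_cases hgm : ∃ j ∈ s, σ⁻¹ (f i) ∈ A j.1 \ A i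
      · by_cases hg1 : ∃ j ∈ s, σ (l i) ∈ A j.1 \ A i
        · -- both corner elements covered: Γ is fully covered, contradiction with card
          obtain ⟨j1, hj1s, hj1⟩ := hg1
          obtain ⟨j2, hj2s, hj2⟩ := hgm
          have hcover : ∀ c, 1 ≤ c → c ≤ M.E.ncard - 1 - k i →
              ∃ j ∈ s, (σ ^ c) (l i) ∈ A j.1 \ A i := by
            intro c hc1 hcm
            by_contra hnc
            push_neg at hnc
            have hc_mem : (σ ^ c) (l i) ∈ M.E \ A i :=
              (H.gamma_mem_iff hr).2 ⟨c, hc1, hcm, rfl⟩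
            have hcne1 : c ≠ 1 := by
              rintro rfl
              exact hnc j1 hj1s (by simpa using hj1)
            have hcnem : c ≠ M.E.ncard - 1 - k i := by
              rintro rfl
              apply hnc j2 hj2s
              rw [← H.gm_eq_pow hr]
              exact hj2
            set s1 := s.filter
              (fun j => ∃ a, 1 ≤ a ∧ a < c ∧ (σ ^ a) (l i) ∈ A j.1 \ A i) with hs1
            have hleft : ∀ j ∈ s1, ∀ z ∈ A j.1 \ A i,
                ∃ a, 1 ≤ a ∧ a < c ∧ (σ ^ a) (l i) = z := by
              intro j hj z hz
              have hzG : z ∈ M.E \ A i := ⟨H.A_subset_E hz.1, hz.2⟩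
              obtain ⟨a, ha1, ham, rfl⟩ := (H.gamma_mem_iff hr).1 hzG
              refine ⟨a, ha1, ?_, rfl⟩
              have hane : a ≠ c := by
                rintro rfl
                exact hnc j (Finset.mem_filter.1 hj).1 hz
              by_contra hge
              push_neg at hge
              have hca : c < a := by omega
              obtain ⟨a', ha'1, ha'c, ha'mem⟩ := (Finset.mem_filter.1 hj).2
              have := H.straddle hr j.2 ha'1 ha'c hca ham ha'mem.1 hz.1
              exact hnc j (Finset.mem_filter.1 hj).1 ⟨this, hc_mem.2⟩
            have hright : ∀ j ∈ s \ s1, ∀ z ∈ A j.1 \ A i,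
                ∃ a, c < a ∧ a ≤ M.E.ncard - 1 - k i ∧ (σ ^ a) (l i) = z := by
              intro j hj z hz
              have hzG : z ∈ M.E \ A i := ⟨H.A_subset_E hz.1, hz.2⟩
              obtain ⟨a, ha1, ham, rfl⟩ := (H.gamma_mem_iff hr).1 hzG
              refine ⟨a, ?_, ham, rfl⟩
              have hane : a ≠ c := by
                rintro rfl
                exact hnc j (Finset.mem_sdiff.1 hj).1 hz
              by_contra hge
              push_neg at hge
              have hac : a < c := by omega
              exact (Finset.mem_sdiff.1 hj).2
                (Finset.mem_filter.2 ⟨(Finset.mem_sdiff.1 hj).1, a, ha1, hac, hz⟩)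
            have hj1in : j1 ∈ s1 := by
              refine Finset.mem_filter.2 ⟨hj1s, 1, le_rfl, by omega, by simpa using hj1⟩
            have hj2in : j2 ∈ s \ s1 := by
              rw [Finset.mem_sdiff]
              refine ⟨hj2s, fun hin => ?_⟩
              have hmem2 : σ⁻¹ (f i) ∈ A j2.1 \ A i := hj2
              rw [H.gm_eq_pow hr] at hmem2
              obtain ⟨a, ha1, hac, hae⟩ := hleft j2 hin _ hmem2
              have : a = M.E.ncard - 1 - k i :=
                H.gamma_inj hr ha1 (by omega) (by omega) le_rfl hae
              omega
            have hdisj : Disjoint (s1.biUnion tf) ((s \ s1).biUnion tf) := by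
              rw [Finset.disjoint_left]
              intro z hz1 hz2
              obtain ⟨ja, hja, hjaz⟩ := Finset.mem_biUnion.1 hz1
              obtain ⟨jb, hjb, hjbz⟩ := Finset.mem_biUnion.1 hz2
              obtain ⟨a, ha1, hac, hae⟩ := hleft ja hja z ((htf_mem _ _).1 hjaz)
              obtain ⟨b, hcb, hbm, hbe⟩ := hright jb hjb z ((htf_mem _ _).1 hjbz)
              have : a = b := H.gamma_inj hr ha1 (by omega) (by omega) hbm (hae.trans hbe.symm)
              omega
            have hs1s : s1 ⊆ s := Finset.filter_subset _ s
            have hcards : (s \ s1).card + s1.card = s.card :=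
              Finset.card_sdiff_add_card_eq_card hs1s
            have hne1 : 0 < s1.card := Finset.card_pos.2 ⟨j1, hj1in⟩
            have hne2 : 0 < (s \ s1).card := Finset.card_pos.2 ⟨j2, hj2in⟩
            have hc1' : s1.card ≤ (s1.biUnion tf).card := ihN s1 (by omega)
            have hc2' : (s \ s1).card ≤ ((s \ s1).biUnion tf).card := ihN _ (by omega)
            have hUeq : s.biUnion tf = s1.biUnion tf ∪ (s \ s1).biUnion tf := by
              ext z
              simp only [Finset.mem_biUnion, Finset.mem_union, Finset.mem_sdiff]
              constructor
              · rintro ⟨j, hj, hz⟩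
                by_cases h : j ∈ s1
                · exact Or.inl ⟨j, h, hz⟩
                · exact Or.inr ⟨j, ⟨hj, h⟩, hz⟩
              · rintro (⟨j, hj, hz⟩ | ⟨j, hj, hz⟩)
                · exact ⟨j, hs1s hj, hz⟩
                · exact ⟨j, hj.1, hz⟩
            have hUcard : (s.biUnion tf).card
                = (s1.biUnion tf).card + ((s \ s1).biUnion tf).card := by
              rw [hUeq, Finset.card_union_of_disjoint hdisj]
            omega
          -- Γ fully covered
          have hGamU : M.E \ A i ⊆ ↑(s.biUnion tf) := by
            intro z hz
            obtain ⟨c, hc1, hcm, rfl⟩ := (H.gamma_mem_iff hr).1 hz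
            obtain ⟨j, hjs, hjD⟩ := hcover c hc1 hcm
            exact hDU j hjs _ hjD
          have h1 : (M.E \ A i).ncard ≤ (s.biUnion tf).card := by
            have := Set.ncard_le_ncard hGamU (Set.toFinite _)
            rwa [Set.ncard_coe_finset] at this
          have h2 : s.card ≤ r - 1 := by
            have hle := Finset.card_le_univ s
            have hcardsub : Fintype.card {j : Fin r // j ≠ i} = r - 1 := by
              have h3 := Fintype.card_subtype_compl (fun j : Fin r => j = i)
              simp only [Fintype.card_subtype_eq, Fintype.card_fin] at h3
              exact h3
            rw [hcardsub] at hle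
            exact hle
          omega
        · -- σ (l i) not covered: all f j.1 lie outside A i, inject via f
          push_neg at hg1
          have hmaps : ∀ j ∈ s, f j.1 ∈ s.biUnion tf := by
            intro j hj
            have hfA : f j.1 ∉ A i := by
              intro hc
              have hx := H.exit_g1 hr j.2 hc
              exact hg1 j hj ⟨hx, H.g1_not_mem hr⟩
            exact hDU j hj _ ⟨H.f_mem, hfA⟩
          have := Finset.card_le_card_of_injOn (fun j => f j.1) (fun j hj => hmaps j hj)
            (fun a _ b _ hab => Subtype.ext (H.f_injective hab))
          omega
      · -- σ⁻¹ (f i) not covered: all l j.1 lie outside A i, inject via l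
        push_neg at hgm
        have hmaps : ∀ j ∈ s, l j.1 ∈ s.biUnion tf := by
          intro j hj
          have hlA : l j.1 ∉ A i := by
            intro hc
            have hf : f i ∈ A j.1 := H.wrap_f hr j.2 hc
            have h1 : σ⁻¹ (f i) ∈ A j.1 := H.gm_mem j.2 hf
            exact hgm j hj ⟨h1, H.gm_not_mem hr⟩
          exact hDU j hj _ ⟨H.l_mem, hlA⟩
        have := Finset.card_le_card_of_injOn (fun j => l j.1) (fun j hj => hmaps j hj)
          (fun a _ b _ hab => Subtype.ext (H.l_injective hr hab))
        omega
  obtain ⟨g, hginj, hg⟩ := (Finset.all_card_le_biUnion_card_iff_exists_injective tf).1 hall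
  exact ⟨g, hginj, fun j => (htf_mem j (g j)).1 (hg j)⟩

end MPC

end HallMain
section ChainDefs

open Function
open scoped Classical

variable {α : Type*} [Fintype α] {M : Matroid α} {σ : Equiv.Perm α} {r : ℕ}
  {f l : Fin r → α} {A : Fin r → Set α} {k : Fin r → ℕ} {s t u v i j : Fin r} {x y : α}

/-- the "forced successor" relation between intervals. -/
def CRel (σ : Equiv.Perm α) {r : ℕ} (f : Fin r → α) (A : Fin r → Set α) (k : Fin r → ℕ)
    (s t : Fin r) : Prop :=
  s ≠ t ∧ 1 ≤ k s ∧ A s \ {f s} ⊆ A t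

noncomputable def nextOpt (σ : Equiv.Perm α) {r : ℕ} (f : Fin r → α) (A : Fin r → Set α)
    (k : Fin r → ℕ) (s : Fin r) : Option (Fin r) :=
  if h : ∃ t, CRel σ f A k s t then some h.choose else none

noncomputable def chainIter (σ : Equiv.Perm α) {r : ℕ} (f : Fin r → α) (A : Fin r → Set α)
    (k : Fin r → ℕ) (i : Fin r) : ℕ → Option (Fin r)
  | 0 => some i
  | (t + 1) => (chainIter σ f A k i t).bind (nextOpt σ f A k)

/-- the chain (forward orbit) of `i` under the forced-successor relation. -/
def chainSet (σ : Equiv.Perm α) {r : ℕ} (f : Fin r → α) (A : Fin r → Set α)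
    (k : Fin r → ℕ) (i : Fin r) : Set (Fin r) :=
  {s | ∃ t, chainIter σ f A k i t = some s}

namespace MPC

lemma crel_f (H : MPC M σ f l A k) (hr : 2 ≤ r) (hrel : CRel σ f A k s t) :
    f t = σ (f s) := by
  obtain ⟨hne, hks, hsub⟩ := hrel
  have hsnd : σ (f s) ∈ A s \ {f s} :=
    ⟨(H.snd_mem hr hks).1, (H.snd_mem hr hks).2⟩
  have hmem : σ (f s) ∈ A t := hsub hsnd
  have hfs : f s ∉ A t := by
    intro hcon
    apply H.anti s t hne
    intro z hz
    rcases Decidable.eq_or_ne z (f s) with h | h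
    · rwa [h]
    · exact hsub ⟨hz, h⟩
  have : σ⁻¹ (σ (f s)) ∉ A t := by simpa using hfs
  exact (H.eq_f_of_pred_not_mem hmem this).symm

lemma crel_unique (H : MPC M σ f l A k) (hr : 2 ≤ r) (h1 : CRel σ f A k s t)
    (h2 : CRel σ f A k s u) : t = u :=
  H.f_injective ((H.crel_f hr h1).trans (H.crel_f hr h2).symm)

lemma crel_k (H : MPC M σ f l A k) (hr : 2 ≤ r) (hrel : CRel σ f A k s t) : 1 ≤ k t := by
  by_contra hcon
  push_neg at hcon
  have hk0 : k t = 0 := by omega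
  have hAt : A t = {f t} := by
    ext z
    rw [H.mem_A_iff]
    constructor
    · rintro ⟨a, ha, rfl⟩
      have : a = 0 := by omega
      subst this; rfl
    · rintro rfl
      exact ⟨0, by omega, rfl⟩
  -- then A t = {σ (f s)} ⊆ A s, contradicting the antichain
  apply H.anti t s (Ne.symm hrel.1)
  rw [hAt, H.crel_f hr hrel]
  simp only [Set.singleton_subset_iff]
  exact (H.snd_mem hr hrel.2.1).1

lemma nextOpt_spec (h : nextOpt σ f A k s = some t) : CRel σ f A k s t := by
  rw [nextOpt] at h
  split_ifs at h with hex
  have ht : hex.choose = t := by simpa using h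
  rw [← ht]
  exact hex.choose_spec

lemma nextOpt_eq (H : MPC M σ f l A k) (hr : 2 ≤ r) (hrel : CRel σ f A k s t) :
    nextOpt σ f A k s = some t := by
  rw [nextOpt]
  split_ifs with hex
  · rw [Option.some_inj]
    exact H.crel_unique hr hex.choose_spec hrel
  · exact absurd ⟨t, hrel⟩ hex

lemma chain_mem_zero : i ∈ chainSet σ f A k i := ⟨0, rfl⟩

lemma chain_closed (H : MPC M σ f l A k) (hr : 2 ≤ r) (hs : s ∈ chainSet σ f A k i)
    (hrel : CRel σ f A k s t) : t ∈ chainSet σ f A k i := by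
  obtain ⟨n, hn⟩ := hs
  refine ⟨n + 1, ?_⟩
  rw [chainIter, hn]
  exact H.nextOpt_eq hr hrel

lemma chain_k (H : MPC M σ f l A k) (hr : 2 ≤ r) (hki : 1 ≤ k i)
    (hs : s ∈ chainSet σ f A k i) : 1 ≤ k s := by
  obtain ⟨n, hn⟩ := hs
  induction n generalizing s with
  | zero =>
    rw [chainIter] at hn
    obtain rfl : i = s := by simpa using hn
    exact hki
  | succ m ih =>
    rw [chainIter] at hn
    rcases hp : chainIter σ f A k i m with - | p
    · rw [hp] at hn; simp at hn
    · rw [hp] at hn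
      simp only [Option.bind_eq_bind, Option.bind_some] at hn
      exact H.crel_k hr (nextOpt_spec hn)

lemma chain_prev (hs : chainIter σ f A k i (n + 1) = some s) :
    ∃ p, chainIter σ f A k i n = some p ∧ CRel σ f A k p s := by
  rw [chainIter] at hs
  rcases hp : chainIter σ f A k i n with - | p
  · rw [hp] at hs; simp at hs
  · rw [hp] at hs
    simp only [Option.bind_eq_bind, Option.bind_some] at hs
    exact ⟨p, rfl, nextOpt_spec hs⟩

end MPC

end ChainDefs
section CutSdr

open Function
open scoped Classical

variable {α : Type*} [Fintype α] {M : Matroid α} {σ : Equiv.Perm α} {r : ℕ}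
  {f l : Fin r → α} {A : Fin r → Set α} {k : Fin r → ℕ} {s t u v i j : Fin r} {x y : α}
  {B : Set α}

namespace MPC

lemma base_cut_sdr (H : MPC M σ f l A k) (i : Fin r)
    (hnb : ¬ ∃ S, IsBlockerAt M f A i S) (hB : M.IsBase B) :
    ∃ ψ : Fin r → α, Injective ψ ∧ (∀ j, ψ j ∈ A j) ∧ ψ i ≠ f i ∧ Set.range ψ = B := by
  classical
  set A'' : Fin r → Set α := fun j => if j = i then A i \ {f i} else A j with hA''
  haveI : Fintype B := B.toFinite.fintype
  set tf : B → Finset (Fin r) := fun x => Finset.univ.filter (fun j => (x : α) ∈ A'' j)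
    with htf
  have htf_mem : ∀ (x : B) (j : Fin r), j ∈ tf x ↔ (x : α) ∈ A'' j := by
    intro x j; rw [htf]; simp
  have hall : ∀ sb : Finset B, sb.card ≤ (sb.biUnion tf).card := by
    intro sb
    by_contra hvio
    push_neg at hvio
    set S : Set α := ↑(sb.image Subtype.val) with hS
    have hmemS : ∀ z, z ∈ S ↔ ∃ x ∈ sb, (x : α) = z := by
      intro z; rw [hS]; simp
    have hScard : S.ncard = sb.card := by
      rw [hS, Set.ncard_coe_finset]
      exact Finset.card_image_of_injective sb Subtype.val_injective
    have hSB : S ⊆ B := by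
      intro z hz
      obtain ⟨x, -, rfl⟩ := (hmemS z).1 hz
      exact x.2
    have hSindep : M.Indep S := hB.indep.subset hSB
    set JS : Set (Fin r) := {j | (A j ∩ S).Nonempty} with hJS
    have hJcard : S.ncard ≤ JS.ncard := by
      obtain ⟨-, φ, hφinj, hφmem⟩ := (H.ind S).1 hSindep
      have h1 : S.ncard = Nat.card S := (Nat.card_coe_set_eq _).symm
      have h2 : JS.ncard = Nat.card JS := (Nat.card_coe_set_eq _).symm
      rw [h1, h2]
      exact Nat.card_le_card_of_injective
        (fun x : S => (⟨φ x, ⟨x.1, hφmem x, x.2⟩⟩ : JS))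
        (fun a b hab => hφinj (Subtype.ext_iff.1 hab))
    have hsub2 : JS \ {i} ⊆ ↑(sb.biUnion tf) := by
      rintro j ⟨⟨z, hzA, hzS⟩, hji⟩
      obtain ⟨x, hx, rfl⟩ := (hmemS z).1 hzS
      refine Finset.mem_coe.2 (Finset.mem_biUnion.2 ⟨x, hx, ?_⟩)
      rw [htf_mem]
      simp only [Set.mem_singleton_iff] at hji
      simp only [hA'', if_neg hji]
      exact hzA
    have hbicard : (↑(sb.biUnion tf) : Set (Fin r)).ncard = (sb.biUnion tf).card :=
      Set.ncard_coe_finset _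
    have hd1 : (JS \ {i}).ncard ≤ (sb.biUnion tf).card := by
      rw [← hbicard]
      exact Set.ncard_le_ncard hsub2 (Set.toFinite _)
    have hiJS : i ∈ JS := by
      by_contra hiJ
      rw [Set.diff_singleton_eq_self hiJ] at hd1
      omega
    have hJSd : (JS \ {i}).ncard = JS.ncard - 1 := Set.ncard_diff_singleton_of_mem hiJS
    have hJS1 : 1 ≤ JS.ncard := Set.ncard_pos (Set.toFinite _) |>.2 ⟨i, hiJS⟩
    have htight : S.ncard = JS.ncard := by omega
    have hAiS : ∀ z ∈ S, z ∈ A i → z = f i := by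
      intro z hzS hzA
      by_contra hne
      have hmemtf : i ∈ sb.biUnion tf := by
        obtain ⟨x, hx, rfl⟩ := (hmemS z).1 hzS
        refine Finset.mem_biUnion.2 ⟨x, hx, ?_⟩
        rw [htf_mem]
        simp only [hA'', if_pos]
        exact ⟨hzA, hne⟩
      have hJsub : JS ⊆ ↑(sb.biUnion tf) := by
        intro j hj
        rcases eq_or_ne j i with rfl | hji
        · exact Finset.mem_coe.2 hmemtf
        · exact hsub2 ⟨hj, hji⟩
      have := Set.ncard_le_ncard hJsub (Set.toFinite _)
      rw [hbicard] at this
      omega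
    have hfiS : f i ∈ S := by
      obtain ⟨z, hzA, hzS⟩ := hiJS
      have := hAiS z hzS hzA
      rwa [this] at hzS
    apply hnb
    refine ⟨S, hSindep, ?_, by rw [← hJS, htight]⟩
    apply subset_antisymm
    · rintro z ⟨hzS, hzA⟩
      exact hAiS z hzS hzA
    · intro z hz
      rw [Set.mem_singleton_iff] at hz
      subst hz
      exact ⟨hfiS, H.f_mem⟩
  obtain ⟨g, hginj, hgmem⟩ := (Finset.all_card_le_biUnion_card_iff_exists_injective tf).1 hall
  have hcard : Fintype.card B = Fintype.card (Fin r) := by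
    rw [Fintype.card_fin, ← H.base_ncard hB, Set.ncard_eq_toFinset_card']
    simp [Set.toFinset_card]
  have hbij : Bijective g := (Fintype.bijective_iff_injective_and_card g).2 ⟨hginj, hcard⟩
  set e := Equiv.ofBijective g hbij with he
  have hkey : ∀ j, ((e.symm j : B) : α) ∈ A'' j := by
    intro j
    have h1 : g (e.symm j) = j := e.apply_symm_apply j
    have := (htf_mem (e.symm j) (g (e.symm j))).1 (hgmem (e.symm j))
    rwa [h1] at this
  refine ⟨fun j => ((e.symm j : B) : α), ?_, ?_, ?_, ?_⟩
  · intro a b hab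
    have : (e.symm a : B) = e.symm b := Subtype.ext hab
    simpa using congrArg e this
  · intro j
    have hthis := hkey j
    show ((e.symm j : B) : α) ∈ A j
    by_cases h : j = i
    · subst h
      simp only [hA'', if_pos] at hthis
      exact hthis.1
    · simpa only [hA'', if_neg h] using hthis
  · have hthis := hkey i
    simp only [hA'', if_pos] at hthis
    show ((e.symm i : B) : α) ≠ f i
    exact hthis.2
  · ext z
    constructor
    · rintro ⟨j, rfl⟩; exact (e.symm j : B).2
    · intro hz
      exact ⟨e ⟨z, hz⟩, by simp⟩

end MPC

end CutSdr
section FixChain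

open Function
open scoped Classical

variable {α : Type*} [Fintype α] {M : Matroid α} {σ : Equiv.Perm α} {r : ℕ}
  {f l : Fin r → α} {A : Fin r → Set α} {k : Fin r → ℕ} {s t u v i j : Fin r} {x y : α}

namespace MPC

lemma fix_chain (H : MPC M σ f l A k) (hr : 2 ≤ r) (i : Fin r) (hki : 1 ≤ k i) :
    ∀ (N : ℕ) (ψ : Fin r → α), Injective ψ → (∀ j, ψ j ∈ A j) → ψ i ≠ f i →
    {s | s ∈ chainSet σ f A k i ∧ ψ s = f s}.ncard ≤ N →
    ∃ ψ' : Fin r → α, Injective ψ' ∧ (∀ j, ψ' j ∈ A j) ∧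
      (∀ s ∈ chainSet σ f A k i, ψ' s ≠ f s) ∧ Set.range ψ' = Set.range ψ := by
  intro N
  induction N with
  | zero =>
    intro ψ hinj hmem hi hbad
    refine ⟨ψ, hinj, hmem, fun s hs hcon => ?_, rfl⟩
    have hmem' : s ∈ {s | s ∈ chainSet σ f A k i ∧ ψ s = f s} := ⟨hs, hcon⟩
    have hpos : 0 < {s | s ∈ chainSet σ f A k i ∧ ψ s = f s}.ncard :=
      Set.ncard_pos (Set.toFinite _) |>.2 ⟨s, hmem'⟩
    omega
  | succ N ihN =>
    intro ψ hinj hmem hi hbad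
    by_cases hempty : {s | s ∈ chainSet σ f A k i ∧ ψ s = f s} = ∅
    · refine ⟨ψ, hinj, hmem, fun s hs hcon => ?_, rfl⟩
      have hmem' : s ∈ {s | s ∈ chainSet σ f A k i ∧ ψ s = f s} := ⟨hs, hcon⟩
      rw [hempty] at hmem'
      exact hmem'
    · have hne := Set.nonempty_iff_ne_empty.2 hempty
      have hexT : ∃ n, ∃ s, chainIter σ f A k i n = some s ∧ ψ s = f s := by
        obtain ⟨s, ⟨⟨n, hn⟩, hbads⟩⟩ := hne
        exact ⟨n, s, hn, hbads⟩
      set T := Nat.find hexT with hT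
      obtain ⟨sb, hsbiter, hsbbad⟩ := Nat.find_spec hexT
      rw [← hT] at hsbiter
      have ht1 : 1 ≤ T := by
        by_contra hcon
        push_neg at hcon
        have hT0 : T = 0 := by omega
        rw [hT0] at hsbiter
        have : i = sb := by simpa [chainIter] using hsbiter
        rw [← this] at hsbbad
        exact hi hsbbad
      have hiter' : chainIter σ f A k i ((T - 1) + 1) = some sb := by
        have e : T - 1 + 1 = T := by omega
        rw [e]
        exact hsbiter
      obtain ⟨p, hpiter, hrel⟩ := chain_prev hiter'
      have hpCH : p ∈ chainSet σ f A k i := ⟨T - 1, hpiter⟩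
      have hsCH : sb ∈ chainSet σ f A k i := ⟨T, hsbiter⟩
      have hpnotbad : ψ p ≠ f p := by
        intro hcon
        exact Nat.find_min hexT (show T - 1 < T by omega) ⟨p, hpiter, hcon⟩
      have hps : p ≠ sb := hrel.1
      have hkp : 1 ≤ k p := H.chain_k hr hki hpCH
      have hfsb : f sb = σ (f p) := H.crel_f hr hrel
      set ψ' : Fin r → α := fun j => ψ (Equiv.swap sb p j) with hψ'
      have hψ's : ψ' sb = ψ p := by
        rw [hψ']; simp [Equiv.swap_apply_left]
      have hψ'p : ψ' p = ψ sb := by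
        rw [hψ']; simp [Equiv.swap_apply_right]
      have hψ'other : ∀ j, j ≠ sb → j ≠ p → ψ' j = ψ j := by
        intro j h1 h2
        rw [hψ']
        simp only []
        rw [Equiv.swap_apply_of_ne_of_ne h1 h2]
      have hinj' : Injective ψ' := hinj.comp (Equiv.swap sb p).injective
      have hmem' : ∀ j, ψ' j ∈ A j := by
        intro j
        rcases eq_or_ne j sb with rfl | hjsb
        · rw [hψ's]
          exact hrel.2.2 ⟨hmem p, hpnotbad⟩
        · rcases eq_or_ne j p with rfl | hjp
          · rw [hψ'p, hsbbad, hfsb]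
            exact (H.snd_mem hr hkp).1
          · rw [hψ'other j hjsb hjp]
            exact hmem j
      have hψ'sb_ne : ψ' sb ≠ f sb := by
        rw [hψ's]
        intro hcon
        rw [← hsbbad] at hcon
        exact hps (hinj hcon)
      have hψ'p_ne : ψ' p ≠ f p := by
        rw [hψ'p, hsbbad, hfsb]
        exact H.sigma_ne hr (H.fE p)
      have hi' : ψ' i ≠ f i := by
        rcases eq_or_ne i sb with rfl | hisb
        · exact hψ'sb_ne
        · rcases eq_or_ne i p with rfl | hip
          · exact hψ'p_ne
          · rw [hψ'other i hisb hip]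
            exact hi
      have hbadsub : {s | s ∈ chainSet σ f A k i ∧ ψ' s = f s}
          ⊆ {s | s ∈ chainSet σ f A k i ∧ ψ s = f s} \ {sb} := by
        rintro s ⟨hsCH', hbad'⟩
        rcases eq_or_ne s sb with rfl | hssb
        · exact absurd hbad' hψ'sb_ne
        · rcases eq_or_ne s p with rfl | hsp
          · exact absurd hbad' hψ'p_ne
          · rw [hψ'other s hssb hsp] at hbad'
            exact ⟨⟨hsCH', hbad'⟩, hssb⟩
      have hsbbadset : sb ∈ {s | s ∈ chainSet σ f A k i ∧ ψ s = f s} := ⟨hsCH, hsbbad⟩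
      have hbad' : {s | s ∈ chainSet σ f A k i ∧ ψ' s = f s}.ncard ≤ N := by
        have h1 := Set.ncard_le_ncard hbadsub (Set.toFinite _)
        have h2 : ({s | s ∈ chainSet σ f A k i ∧ ψ s = f s} \ {sb}).ncard
            = {s | s ∈ chainSet σ f A k i ∧ ψ s = f s}.ncard - 1 :=
          Set.ncard_diff_singleton_of_mem hsbbadset
        have h3 : 1 ≤ {s | s ∈ chainSet σ f A k i ∧ ψ s = f s}.ncard :=
          Set.ncard_pos (Set.toFinite _) |>.2 ⟨sb, hsbbadset⟩
        omega
      obtain ⟨ψ'', h1, h2, h3, h4⟩ := ihN ψ' hinj' hmem' hi' hbad'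
      refine ⟨ψ'', h1, h2, h3, ?_⟩
      rw [h4]
      ext z
      constructor
      · rintro ⟨j, rfl⟩
        exact ⟨Equiv.swap sb p j, rfl⟩
      · rintro ⟨j, rfl⟩
        refine ⟨Equiv.swap sb p j, ?_⟩
        rw [hψ']
        simp

end MPC

end FixChain
section CutPres

open Function
open scoped Classical

variable {α : Type*} [Fintype α] {M : Matroid α} {σ : Equiv.Perm α} {r : ℕ}
  {f l : Fin r → α} {A : Fin r → Set α} {k : Fin r → ℕ} {s t u v i j : Fin r} {x y : α}

lemma pow_apply_one {α : Type*} (σ : Equiv.Perm α) (a : ℕ) (x : α) :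
    (σ ^ a) (σ x) = (σ ^ (a + 1)) x := by
  have h : σ x = (σ ^ 1) x := by simp
  rw [h, pow_pow_apply]

namespace MPC

lemma blocker_of_min (H : MPC M σ f l A k) (hr : 2 ≤ r)
    (hmin : ∀ (f' l' : Fin r → α) (A' : Fin r → Set α),
        (∀ i, A' i ⊆ A i) → IsMultiPathPres M σ f' l' A' → A' = A)
    (i : Fin r) (hki : 1 ≤ k i) :
    ∃ S, IsBlockerAt M f A i S := by
  by_contra hnb
  set CH := chainSet σ f A k i with hCH
  set A' : Fin r → Set α := fun s => if s ∈ CH then A s \ {f s} else A s with hA'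
  set f' : Fin r → α := fun s => if s ∈ CH then σ (f s) else f s with hf'
  have hA'cut : ∀ s ∈ CH, A' s = A s \ {f s} := by
    intro s hs; simp only [hA', if_pos hs]
  have hA'un : ∀ s ∉ CH, A' s = A s := by
    intro s hs; simp only [hA', if_neg hs]
  have hf'cut : ∀ s ∈ CH, f' s = σ (f s) := by
    intro s hs; simp only [hf', if_pos hs]
  have hf'un : ∀ s ∉ CH, f' s = f s := by
    intro s hs; simp only [hf', if_neg hs]
  have hA'sub : ∀ s, A' s ⊆ A s := by
    intro s
    by_cases h : s ∈ CH
    · rw [hA'cut s h]; exact Set.diff_subset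
    · rw [hA'un s h]
  have hchk : ∀ s ∈ CH, 1 ≤ k s := fun s hs => H.chain_k hr hki hs
  -- antichain
  have hanti' : IsSetAntichain A' := by
    intro u v huv hsub
    by_cases hu : u ∈ CH <;> by_cases hv : v ∈ CH
    · rw [hA'cut u hu, hA'cut v hv] at hsub
      have hrel : CRel σ f A k u v := ⟨huv, hchk u hu, hsub.trans Set.diff_subset⟩
      have hfv : f v = σ (f u) := H.crel_f hr hrel
      have hmem : σ (f u) ∈ A u \ {f u} :=
        ⟨(H.snd_mem hr (hchk u hu)).1, (H.snd_mem hr (hchk u hu)).2⟩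
      have h2 := hsub hmem
      rw [← hfv] at h2
      exact h2.2 rfl
    · rw [hA'cut u hu, hA'un v hv] at hsub
      exact hv (H.chain_closed hr hu ⟨huv, hchk u hu, hsub⟩)
    · rw [hA'un u hu, hA'cut v hv] at hsub
      exact H.anti u v huv (hsub.trans Set.diff_subset)
    · rw [hA'un u hu, hA'un v hv] at hsub
      exact H.anti u v huv hsub
  -- intervals
  have hint' : ∀ s, IsCycInterval σ (f' s) (l s) (A' s) := by
    intro s
    by_cases h : s ∈ CH
    · rw [hA'cut s h, hf'cut s h]
      have hks := hchk s h
      refine ⟨k s - 1, ?_, ?_⟩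
      · rw [pow_apply_one]
        have e : k s - 1 + 1 = k s := by omega
        rw [e]
        exact H.kf s
      · ext z
        simp only [Set.mem_diff, Set.mem_singleton_iff, Set.mem_setOf_eq]
        constructor
        · rintro ⟨hz, hzne⟩
          obtain ⟨a, ha, rfl⟩ := H.mem_A_iff.1 hz
          have ha1 : 1 ≤ a := by
            rcases Nat.eq_zero_or_pos a with h0 | h0
            · subst h0; simp at hzne
            · exact h0
          refine ⟨a - 1, by omega, ?_⟩
          rw [pow_apply_one]
          have e : a - 1 + 1 = a := by omega
          rw [e]
        · rintro ⟨a, ha, rfl⟩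
          simp only [pow_apply_one]
          constructor
          · exact H.pow_f_mem (by omega)
          · intro hcon
            have h0 : (σ ^ (a + 1)) (f s) = (σ ^ 0) (f s) := by
              rw [hcon]; rfl
            have := H.enum_inj hr (by omega) (by omega) h0
            omega
    · rw [hA'un s h, hf'un s h]
      exact ⟨k s, H.kf s, H.kA s⟩
  -- transversal presentation
  have hind' : ∀ I : Set α, M.Indep I ↔ I ⊆ M.E ∧
      ∃ φ : I → Fin r, Injective φ ∧ ∀ x : I, (x : α) ∈ A' (φ x) := by
    intro I
    constructor
    · intro hI
      obtain ⟨B, hB, hIB⟩ := hI.exists_isBase_superset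
      obtain ⟨ψ₀, hinj0, hmem0, hne0, hrange0⟩ := H.base_cut_sdr i hnb hB
      obtain ⟨ψ, hinj, hmem, hCHgood, hrange⟩ :=
        H.fix_chain hr i hki _ ψ₀ hinj0 hmem0 hne0 le_rfl
      have hrangeB : Set.range ψ = B := by rw [hrange, hrange0]
      have hgood : ∀ j, ψ j ∈ A' j := by
        intro j
        by_cases h : j ∈ CH
        · rw [hA'cut j h]; exact ⟨hmem j, hCHgood j h⟩
        · rw [hA'un j h]; exact hmem j
      refine ⟨hI.subset_ground, ?_⟩
      set e := Equiv.ofInjective ψ hinj with he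
      have hIr : ∀ x : I, (x : α) ∈ Set.range ψ := fun x => by
        rw [hrangeB]; exact hIB x.2
      refine ⟨fun x => e.symm ⟨(x : α), hIr x⟩, ?_, ?_⟩
      · intro a b hab
        have h2 := congrArg e hab
        rw [e.apply_symm_apply, e.apply_symm_apply] at h2
        exact Subtype.ext (by simpa using congrArg Subtype.val h2)
      · intro x
        have hx : ψ (e.symm ⟨(x : α), hIr x⟩) = (x : α) := by
          have h1 := e.apply_symm_apply ⟨(x : α), hIr x⟩
          have h2 := congrArg Subtype.val h1
          rwa [he, Equiv.ofInjective_apply] at h2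
        rw [← hx]
        exact hgood _
    · rintro ⟨hIE, φ, hinj, hmem⟩
      exact (H.ind I).2 ⟨hIE, φ, hinj, fun x => hA'sub _ (hmem x)⟩
  have hpres' : IsMultiPathPres M σ f' l A' := by
    refine ⟨H.cyc, ?_, hint', hanti', rfl, hind'⟩
    intro s
    by_cases h : s ∈ CH
    · rw [hf'cut s h]; exact H.cyc.mapsTo (H.fE s)
    · rw [hf'un s h]; exact H.fE s
  have heq := hmin f' l A' hA'sub hpres'
  have hiCH : i ∈ CH := chain_mem_zero
  have h1 : A' i = A i := congrFun heq i
  rw [hA'cut i hiCH] at h1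
  have h2 : f i ∈ A i \ {f i} := by
    rw [h1]; exact H.f_mem
  exact h2.2 rfl

end MPC

end CutPres

/-- Every set in a minimal σ-interval presentation of a multi-path matroid `M` is a
cocircuit of `M`; consequently any minimal σ-interval presentation is a minimal
presentation.  In particular every set of the presentation has at most `m + 1` elements,
where `m = |E| - r(M)` is the nullity (expressed as `|E \ B|` for any basis `B`). -/
theorem stmt_19 {α : Type*} [Fintype α] (M : Matroid α) (σ : Equiv.Perm α) {r : ℕ}
    (f l : Fin r → α) (A : Fin r → Set α) (hpres : IsMultiPathPres M σ f l A)
    (hmin : ∀ (f' l' : Fin r → α) (A' : Fin r → Set α),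
        (∀ i, A' i ⊆ A i) → IsMultiPathPres M σ f' l' A' → A' = A) :
    (∀ i, IsCocircuitOf M (A i)) ∧
    (∀ A' : Fin r → Set α, (∀ i, A' i ⊆ A i) → IsTransversalPres M M.E A' → A' = A) ∧
    (∀ i, ∀ B, M.IsBase B → (A i).ncard ≤ (M.E \ B).ncard + 1) := by
  classical
  obtain ⟨k, H⟩ := isMultiPathPres_iff_mpc.1 hpres
  have hdiff : ∀ i : Fin r, ∃ g : {j : Fin r // j ≠ i} → α,
      Function.Injective g ∧ ∀ j, g j ∈ A j.1 \ A i := by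
    intro i
    rcases le_or_gt 2 r with hr | hr
    · have hbound : r ≤ (M.E \ A i).ncard + 1 := by
        rcases Nat.eq_zero_or_pos (k i) with hk0 | hk1
        · have h1 := H.gamma_ncard (i := i) hr
          have hnr : r ≤ M.E.ncard := by
            have h2 : (Set.range f).ncard = r := MPC.ncard_range H.f_injective
            have h3 : Set.range f ⊆ M.E := by rintro z ⟨j, rfl⟩; exact H.fE j
            have := Set.ncard_le_ncard h3 (M.E.toFinite)
            omega
          omega
        · obtain ⟨S, hS⟩ := H.blocker_of_min hr hmin i hk1
          exact H.blocker_bound hr hS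
      exact H.exists_diffs_sdr hr i hbound
    · have hr1 : r = 1 := by
        have := i.isLt
        omega
      subst hr1
      refine ⟨fun j => f i, ?_, ?_⟩
      · intro a b _
        exfalso
        exact a.2 (Fin.ext (by omega))
      · intro j
        exact absurd (Fin.ext (by omega)) j.2
  have hcoc : ∀ i, IsCocircuitOf M (A i) := by
    intro i
    obtain ⟨g, h1, h2⟩ := hdiff i
    exact H.cocircuit_of_diffs i g h1 h2
  refine ⟨hcoc, ?_, ?_⟩
  · intro A' hsub hpres'
    funext i
    have hA'ind := hpres'.2
    have hdep : M✶.Dep (A' i) := by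
      rw [Matroid.dep_iff]
      constructor
      · intro hind
        rw [Matroid.dual_indep_iff_exists'] at hind
        obtain ⟨-, B, hB, hdisj⟩ := hind
        obtain ⟨ψ, hinj, hmem, hrange⟩ := H.base_sdr_gen (A' := A')
          (fun I hI => by
            obtain ⟨-, φ, hφ1, hφ2⟩ := (hA'ind I).1 hI
            exact ⟨φ, hφ1, hφ2⟩) hB
        have hψB : ψ i ∈ B := by rw [← hrange]; exact ⟨i, rfl⟩
        exact Set.disjoint_left.1 hdisj (hmem i) hψB
      · rw [Matroid.dual_ground]
        exact (hsub i).trans H.A_subset_E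
    by_contra hne
    have hssub : A' i ⊂ A i := ⟨hsub i, fun hc => hne (subset_antisymm (hsub i) hc)⟩
    exact (hcoc i).2 (A' i) hssub hdep
  · intro i B hB
    obtain ⟨g, hginj, hg⟩ := hdiff i
    have himg : Set.range g ⊆ M.E \ A i := by
      rintro z ⟨j, rfl⟩
      exact ⟨H.A_subset_E (hg j).1, (hg j).2⟩
    have h2 : (Set.range g).ncard = r - 1 := by
      have ha : (Set.range g).ncard = Nat.card (Set.range g) := (Nat.card_coe_set_eq _).symm
      rw [ha, Nat.card_range_of_injective hginj, Nat.card_eq_fintype_card]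
      have h3 := Fintype.card_subtype_compl (fun j : Fin r => j = i)
      simp only [Fintype.card_subtype_eq, Fintype.card_fin] at h3
      exact h3
    have h3 : r - 1 ≤ (M.E \ A i).ncard := by
      rw [← h2]
      exact Set.ncard_le_ncard himg (Set.toFinite _)
    have h4 : (M.E \ A i).ncard + (A i).ncard = M.E.ncard :=
      Set.ncard_diff_add_ncard_of_subset H.A_subset_E (M.E.toFinite)
    have h5 : B.ncard = r := H.base_ncard hB
    have h6 : (M.E \ B).ncard + B.ncard = M.E.ncard :=
      Set.ncard_diff_add_ncard_of_subset hB.subset_ground (M.E.toFinite)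
    have hr1 : 1 ≤ r := by
      have := i.isLt
      omega
    omega
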